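/- For every real number b ≥ 2, one has b · e^b · ∑_{r=3}^{∞} 2^r · (2/e)^{b·2^r} < 3. Equivalently, with q' = log₂ b + 7 (when b is an integer power of 2), ∑_{q=q'}^{∞} 2^q · e^{b − 2^q} · 2^{2^q} < 3. -/

import Mathlib

open Real

/-- The convergence estimate used in the analysis of `S_β`: for every real `b ≥ 2`,
`b · e^b · ∑_{r=3}^∞ 2^r · (2/e)^(b·2^r) < 3`. -/
theorem stmt_2 (b : ℝ) (hb : 2 ≤ b) :
    b * Real.exp b *
      (∑' r : ℕ, (2 : ℝ) ^ (r + 3) * (2 / Real.exp 1) ^ (b * 2 ^ (r + 3))) < 3 := by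
  have he : (2.7182818283 : ℝ) < Real.exp 1 := Real.exp_one_gt_d9
  set c : ℝ := 2 / Real.exp 1 with hc
  have hc0 : 0 < c := by positivity
  have hcle : c ≤ 20 / 27 := by
    rw [hc, div_le_div_iff₀ (Real.exp_pos 1) (by norm_num)]
    nlinarith
  have hc1 : c ≤ 1 := by linarith
  set d : ℝ := c ^ ((8 : ℝ) * b) with hd
  have hd0 : 0 < d := Real.rpow_pos_of_pos hc0 _
  have hc16 : c ^ (16 : ℕ) ≤ 1 / 8 := by
    calc c ^ (16 : ℕ) ≤ (20 / 27 : ℝ) ^ (16 : ℕ) := pow_le_pow_left₀ hc0.le hcle 16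
      _ ≤ 1 / 8 := by norm_num
  have hdle : d ≤ c ^ (16 : ℕ) := by
    rw [hd, ← Real.rpow_natCast c 16]
    exact Real.rpow_le_rpow_of_exponent_ge hc0 hc1 (by push_cast; linarith)
  -- termwise bound by a geometric series
  have key : ∀ r : ℕ, (2 : ℝ) ^ (r + 3) * c ^ (b * 2 ^ (r + 3)) ≤ 8 * d * (1 / 4 : ℝ) ^ r := by
    intro r
    have h1 : c ^ (b * 2 ^ (r + 3)) = d ^ (2 ^ r : ℕ) := by
      rw [show b * (2 : ℝ) ^ (r + 3) = ((8 : ℝ) * b) * ((2 ^ r : ℕ) : ℝ) by push_cast; ring,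
        Real.rpow_mul hc0.le, Real.rpow_natCast, ← hd]
    rw [h1]
    have hpow : 1 ≤ 2 ^ r := Nat.one_le_two_pow
    have h2 : d ^ (2 ^ r : ℕ) = d * d ^ (2 ^ r - 1 : ℕ) := by
      rw [← pow_succ']
      congr 1
      omega
    have hrle : r ≤ 2 ^ r - 1 := by
      have := Nat.lt_two_pow_self (n := r)
      omega
    have h3 : d ^ (2 ^ r - 1 : ℕ) ≤ (1 / 8 : ℝ) ^ r := by
      calc d ^ (2 ^ r - 1 : ℕ) ≤ (c ^ (16 : ℕ)) ^ (2 ^ r - 1 : ℕ) :=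
            pow_le_pow_left₀ hd0.le hdle _
        _ ≤ (c ^ (16 : ℕ)) ^ r :=
            pow_le_pow_of_le_one (by positivity) (by linarith) hrle
        _ ≤ (1 / 8 : ℝ) ^ r := pow_le_pow_left₀ (by positivity) hc16 r
    calc (2 : ℝ) ^ (r + 3) * d ^ (2 ^ r : ℕ)
        = 8 * d * ((2 : ℝ) ^ r * d ^ (2 ^ r - 1 : ℕ)) := by rw [h2]; ring
      _ ≤ 8 * d * ((2 : ℝ) ^ r * (1 / 8 : ℝ) ^ r) := by
          have h8 : (0 : ℝ) ≤ 8 * d := by positivity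
          have h2r : (0 : ℝ) ≤ (2 : ℝ) ^ r := by positivity
          exact mul_le_mul_of_nonneg_left (mul_le_mul_of_nonneg_left h3 h2r) h8
      _ = 8 * d * (1 / 4 : ℝ) ^ r := by
          rw [← mul_pow]; norm_num
  have hg : Summable (fun r : ℕ => 8 * d * (1 / 4 : ℝ) ^ r) :=
    (summable_geometric_of_lt_one (by norm_num) (by norm_num)).mul_left _
  have hf : Summable (fun r : ℕ => (2 : ℝ) ^ (r + 3) * c ^ (b * 2 ^ (r + 3))) := by
    apply Summable.of_nonneg_of_le (fun r => ?_) key hg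
    have : 0 ≤ c ^ (b * 2 ^ (r + 3)) := (Real.rpow_pos_of_pos hc0 _).le
    positivity
  have hsum : (∑' r : ℕ, (2 : ℝ) ^ (r + 3) * c ^ (b * 2 ^ (r + 3))) ≤ 32 / 3 * d := by
    calc (∑' r : ℕ, (2 : ℝ) ^ (r + 3) * c ^ (b * 2 ^ (r + 3)))
        ≤ ∑' r : ℕ, 8 * d * (1 / 4 : ℝ) ^ r := hf.tsum_le_tsum key hg
      _ = 8 * d * ∑' r : ℕ, (1 / 4 : ℝ) ^ r := tsum_mul_left
      _ = 8 * d * (1 - 1 / 4)⁻¹ := by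
          rw [tsum_geometric_of_lt_one (by norm_num) (by norm_num)]
      _ = 32 / 3 * d := by ring_nf
  -- the numeric bound on b * exp b * d
  have hK : Real.exp b * d = ((256 : ℝ) / Real.exp 1 ^ (7 : ℕ)) ^ b := by
    have h8 : d = (c ^ (8 : ℝ)) ^ b := by rw [hd, Real.rpow_mul hc0.le]
    rw [h8, ← Real.exp_one_rpow b, ← Real.mul_rpow (Real.exp_pos 1).le (by positivity)]
    congr 1
    rw [show (8 : ℝ) = ((8 : ℕ) : ℝ) by norm_num, Real.rpow_natCast, hc, div_pow]
    have hne : Real.exp 1 ≠ 0 := (Real.exp_pos 1).ne'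
    field_simp
    have hex : Real.exp 8 = Real.exp 1 * Real.exp 7 := by
      rw [← Real.exp_add]; norm_num
    ring
  have hKle : ((256 : ℝ) / Real.exp 1 ^ (7 : ℕ)) ≤ 1 / 4 := by
    rw [div_le_div_iff₀ (by positivity) (by norm_num)]
    have h7 : (2.7182818283 : ℝ) ^ (7 : ℕ) ≤ Real.exp 1 ^ (7 : ℕ) :=
      pow_le_pow_left₀ (by norm_num) he.le 7
    nlinarith
  have hlog4 : (1 : ℝ) ≤ Real.log 4 := by
    rw [show (4 : ℝ) = 2 ^ 2 by norm_num, Real.log_pow]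
    have := Real.log_two_gt_d9
    push_cast
    linarith
  have h4sub : (4 : ℝ) ^ (b - 2) = (4 : ℝ) ^ b / 16 := by
    rw [Real.rpow_sub (by norm_num), show (2 : ℝ) = ((2 : ℕ) : ℝ) by norm_num,
      Real.rpow_natCast]
    norm_num
  have h2b : b - 1 ≤ (4 : ℝ) ^ (b - 2) := by
    rw [Real.rpow_def_of_pos (by norm_num : (0 : ℝ) < 4)]
    have h3 := Real.add_one_le_exp (Real.log 4 * (b - 2))
    nlinarith
  have h8b : 8 * b ≤ (4 : ℝ) ^ b := by
    rw [h4sub] at h2b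
    linarith
  have h4pos : (0 : ℝ) < (4 : ℝ) ^ b := Real.rpow_pos_of_pos (by norm_num) _
  have hquarter : b * ((1 / 4 : ℝ)) ^ b ≤ 1 / 8 := by
    have hinv : ((1 / 4 : ℝ)) ^ b = ((4 : ℝ) ^ b)⁻¹ := by
      rw [show (1 / 4 : ℝ) = 4⁻¹ by norm_num, Real.inv_rpow (by norm_num)]
    rw [hinv, ← div_eq_mul_inv, div_le_iff₀ h4pos]
    linarith
  have hbed : b * (Real.exp b * d) ≤ 1 / 8 := by
    calc b * (Real.exp b * d) = b * ((256 : ℝ) / Real.exp 1 ^ (7 : ℕ)) ^ b := by rw [hK]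
      _ ≤ b * ((1 / 4 : ℝ)) ^ b := by
          have := Real.rpow_le_rpow (by positivity) hKle (by linarith : (0 : ℝ) ≤ b)
          exact mul_le_mul_of_nonneg_left this (by linarith)
      _ ≤ 1 / 8 := hquarter
  have hbe : (0 : ℝ) ≤ b * Real.exp b := mul_nonneg (by linarith) (Real.exp_pos b).le
  calc b * Real.exp b * (∑' r : ℕ, (2 : ℝ) ^ (r + 3) * c ^ (b * 2 ^ (r + 3)))
      ≤ b * Real.exp b * (32 / 3 * d) := mul_le_mul_of_nonneg_left hsum hbe
    _ = 32 / 3 * (b * (Real.exp b * d)) := by ring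
    _ ≤ 32 / 3 * (1 / 8) := by linarith
    _ < 3 := by norm_num
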